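/- arXiv:math/0703262 — 3 statements merged into one kernel-verified Lean document; each statement's English description precedes it below -/
import Mathlib

section
/- The list L_n is exactly an enumeration (without repetition) of all words w_1 ... w_n with w_1 = 2 and 2 ≤ w_{j+1} ≤ w_j + 1 for all 1 ≤ j < n. -/
def lastD (w : List Nat) : Nat := w.getLastD 0

/-- Shifted production for the Catalan rule:
`sC k 2 = [2, k+1, k, ..., 3]` and, for `3 ≤ i ≤ k+1`,
`sC k i = [i, i+1, ..., k+1, 2, 3, ..., i-1]`. -/
def sC (k i : Nat) : List Nat :=
  if i = 2 then 2 :: (List.range (k - 1)).map (fun t => k + 1 - t)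
  else (List.range (k + 2 - i)).map (fun t => i + t) ++
       (List.range (i - 2)).map (fun t => 2 + t)

/-- Builds the sublists `L_n^i` from the previous level, carrying the
starting digit of the next shifted production. -/
def graySubsAux : Nat → List (List Nat) → List (List (List Nat))
  | _, [] => []
  | j, w :: ws =>
    let sub := (sC (lastD w) j).map (fun d => w ++ [d])
    sub :: graySubsAux (lastD (sub.getLastD [])) ws

def graySubs (prev : List (List Nat)) : List (List (List Nat)) :=
  graySubsAux 2 prev

/-- The Gray code list `L_n` for the Catalan succession rule. -/
def grayL : Nat → List (List Nat)
  | 0 => []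
  | 1 => [[2]]
  | n + 2 => (graySubs (grayL (n + 1))).flatten

/-- `w` is a path from the root in the Catalan generating tree:
`w₁ = 2` and `2 ≤ w_{j+1} ≤ w_j + 1`. -/
def isTreeWord (w : List Nat) : Prop :=
  w.head? = some 2 ∧ ∀ j, j + 1 < w.length →
    2 ≤ w.getD (j + 1) 0 ∧ w.getD (j + 1) 0 ≤ w.getD j 0 + 1

lemma sC_mem {k d : Nat} (hk : 2 ≤ k) (j : Nat) (hj : j = 2 ∨ j = 3) :
    d ∈ sC k j ↔ 2 ≤ d ∧ d ≤ k + 1 := by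
  rcases hj with rfl | rfl
  · rw [show sC k 2 = 2 :: (List.range (k - 1)).map (fun t => k + 1 - t) from if_pos rfl]
    simp only [List.mem_cons, List.mem_map, List.mem_range]
    constructor
    · rintro (rfl | ⟨t, ht, rfl⟩) <;> omega
    · rintro ⟨h2, h3⟩
      by_cases h : d = 2
      · exact Or.inl h
      · exact Or.inr ⟨k + 1 - d, by omega, by omega⟩

  · simp only [sC, if_neg (by omega : (3:Nat) ≠ 2), List.mem_append, List.mem_map,
      List.mem_range]
    constructor
    · rintro (⟨t, ht, rfl⟩ | ⟨t, ht, rfl⟩) <;> omega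
    · rintro ⟨h2, h3⟩
      by_cases h : d = 2
      · exact Or.inr ⟨0, by omega, by omega⟩
      · exact Or.inl ⟨d - 3, by omega, by omega⟩

lemma sC_nodup {k : Nat} (hk : 2 ≤ k) (j : Nat) (hj : j = 2 ∨ j = 3) :
    (sC k j).Nodup := by
  rcases hj with rfl | rfl
  · rw [show sC k 2 = 2 :: (List.range (k - 1)).map (fun t => k + 1 - t) from if_pos rfl]
    refine List.Nodup.cons ?_ (List.Nodup.map_on ?_ List.nodup_range)
    · simp only [List.mem_map, List.mem_range]
      rintro ⟨t, ht, h⟩; omega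
    · intro x hx y hy h
      simp only [List.mem_range] at hx hy; omega
  · simp only [sC, if_neg (by omega : (3:Nat) ≠ 2)]
    refine List.Nodup.append (List.Nodup.map_on ?_ List.nodup_range)
      (List.Nodup.map_on ?_ List.nodup_range) ?_
    · intro x hx y hy h; omega
    · intro x hx y hy h; omega
    · intro a ha hb
      simp only [List.mem_map, List.mem_range] at ha hb
      obtain ⟨t, ht, rfl⟩ := ha
      obtain ⟨s, hs, h⟩ := hb
      omega

lemma sC_ne_nil {k : Nat} (hk : 2 ≤ k) (j : Nat) (hj : j = 2 ∨ j = 3) :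
    sC k j ≠ [] := by
  rcases hj with rfl | rfl
  · simp [sC]
  · simp only [sC, if_neg (by omega : (3:Nat) ≠ 2)]
    intro h
    rw [List.append_eq_nil_iff] at h
    have := h.2
    rw [List.map_eq_nil_iff, List.range_eq_nil] at this
    omega

lemma sC_last {k : Nat} (hk : 2 ≤ k) (j : Nat) (hj : j = 2 ∨ j = 3) :
    (sC k j).getLastD 0 = (if j = 2 then 3 else 2) := by
  rcases hj with rfl | rfl
  · obtain ⟨m, rfl⟩ : ∃ m, k = m + 2 := ⟨k - 2, by omega⟩
    rw [show sC (m + 2) 2 = 2 :: (List.range (m + 2 - 1)).map (fun t => m + 2 + 1 - t)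
      from if_pos rfl]
    have : m + 2 - 1 = m + 1 := by omega
    rw [this, List.range_succ, List.map_append]
    show ((2 :: _) ++ _).getLastD 0 = 3
    simp only [List.map_cons, List.map_nil]
    rw [List.getLastD_concat]
    omega
  · simp only [sC, if_neg (by omega : (3:Nat) ≠ 2), if_neg (by omega : (3:Nat) ≠ 2)]
    have : (3:Nat) - 2 = 1 := rfl
    rw [this]
    simp [List.range_succ, List.getLastD_concat]

lemma lastD_concat (w : List Nat) (d : Nat) : lastD (w ++ [d]) = d := by
  simp [lastD, List.getLastD_concat]

lemma concat_inj {w w' : List Nat} {d d' : Nat} (h : w ++ [d] = w' ++ [d']) :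
    w = w' ∧ d = d' := by
  have h1 : w = w' := by
    have := congrArg List.dropLast h
    simpa [List.dropLast_concat] using this
  subst h1
  exact ⟨rfl, by simpa using h⟩

lemma aux_main : ∀ (ws : List (List Nat)) (j : Nat), (j = 2 ∨ j = 3) →
    (∀ w ∈ ws, 2 ≤ lastD w) → ws.Nodup →
    (graySubsAux j ws).flatten.Nodup ∧
    ∀ v, v ∈ (graySubsAux j ws).flatten ↔
      ∃ w ∈ ws, ∃ d, 2 ≤ d ∧ d ≤ lastD w + 1 ∧ v = w ++ [d] := by
  intro ws
  induction ws with
  | nil => intro j hj h1 h2; simp [graySubsAux]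
  | cons w ws ih =>
    intro j hj hlast hnd
    have hk : 2 ≤ lastD w := hlast w (List.mem_cons_self)
    have hne : sC (lastD w) j ≠ [] := sC_ne_nil hk j hj
    -- compute the next parameter
    have hsub : (((sC (lastD w) j).map (fun d => w ++ [d])).getLastD [])
        = w ++ [(sC (lastD w) j).getLastD 0] := by
      rw [List.getLastD_eq_getLast?, List.getLast?_map,
        List.getLastD_eq_getLast?]
      obtain ⟨a, ha⟩ := List.getLast?_isSome.mpr hne |> Option.isSome_iff_exists.mp
      rw [ha]; rfl
    have hj2 : lastD (((sC (lastD w) j).map (fun d => w ++ [d])).getLastD []) = 2 ∨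
        lastD (((sC (lastD w) j).map (fun d => w ++ [d])).getLastD []) = 3 := by
      rw [hsub, lastD_concat, sC_last hk j hj]
      rcases hj with rfl | rfl <;> simp
    simp only [graySubsAux]
    obtain ⟨ih1, ih2⟩ := ih _ hj2 (fun u hu => hlast u (List.mem_cons_of_mem _ hu))
      (List.Nodup.of_cons hnd)
    have hmemsub : ∀ v, v ∈ (sC (lastD w) j).map (fun d => w ++ [d]) ↔
        ∃ d, 2 ≤ d ∧ d ≤ lastD w + 1 ∧ v = w ++ [d] := by
      intro v
      simp only [List.mem_map]
      constructor
      · rintro ⟨d, hd, rfl⟩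
        have := (sC_mem hk j hj).mp hd
        exact ⟨d, this.1, this.2, rfl⟩
      · rintro ⟨d, h1, h2, rfl⟩
        exact ⟨d, (sC_mem hk j hj).mpr ⟨h1, h2⟩, rfl⟩
    constructor
    · rw [List.flatten_cons]
      refine List.Nodup.append ?_ ih1 ?_
      · refine List.Nodup.map ?_ (sC_nodup hk j hj)
        intro a b h; simpa using h
      · intro v hv hv'
        obtain ⟨d, _, _, rfl⟩ := (hmemsub v).mp hv
        obtain ⟨w', hw', d', _, _, heq⟩ := (ih2 _).mp hv'
        obtain ⟨rfl, rfl⟩ := concat_inj heq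
        exact (List.nodup_cons.mp hnd).1 hw'
    · intro v
      rw [List.flatten_cons, List.mem_append, hmemsub, ih2]
      constructor
      · rintro (⟨d, h1, h2, rfl⟩ | ⟨w', hw', d, h1, h2, rfl⟩)
        · exact ⟨w, List.mem_cons_self, d, h1, h2, rfl⟩
        · exact ⟨w', List.mem_cons_of_mem _ hw', d, h1, h2, rfl⟩
      · rintro ⟨w', hw', d, h1, h2, rfl⟩
        rcases List.mem_cons.mp hw' with rfl | hw'
        · exact Or.inl ⟨d, h1, h2, rfl⟩
        · exact Or.inr ⟨w', hw', d, h1, h2, rfl⟩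

lemma lastD_eq_getD {u : List Nat} (h : u ≠ []) :
    lastD u = u.getD (u.length - 1) 0 := by
  rw [lastD, List.getLastD_eq_getLast?, List.getLast?_eq_getElem?,
    List.getD_eq_getElem?_getD]

lemma tree_lastD {w : List Nat} (hw : isTreeWord w) (hne : w ≠ []) : 2 ≤ lastD w := by
  obtain ⟨h1, h2⟩ := hw
  rcases Nat.lt_or_ge w.length 2 with h | h
  · have hlen : w.length = 1 := by
      have := List.length_pos_iff.mpr hne; omega
    obtain ⟨a, rfl⟩ := List.length_eq_one_iff.mp hlen
    simp only [List.head?_cons, Option.some_inj] at h1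
    subst h1; simp [lastD]
  · have := (h2 (w.length - 2) (by omega)).1
    rw [lastD_eq_getD hne]
    have : w.length - 2 + 1 = w.length - 1 := by omega
    rw [← this]
    exact (h2 (w.length - 2) (by omega)).1

lemma tree_concat {u : List Nat} (hu : u ≠ []) (d : Nat) :
    isTreeWord (u ++ [d]) ↔ isTreeWord u ∧ 2 ≤ d ∧ d ≤ lastD u + 1 := by
  have hL : 1 ≤ u.length := List.length_pos_iff.mpr hu
  have hhead : (u ++ [d]).head? = u.head? := by
    cases u with
    | nil => exact absurd rfl hu
    | cons a l => rfl
  have hgetlast : (u ++ [d]).getD u.length 0 = d := by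
    rw [List.getD_append_right _ _ _ _ (le_refl _)]
    simp
  have hget : ∀ i < u.length, (u ++ [d]).getD i 0 = u.getD i 0 :=
    fun i hi => List.getD_append _ _ _ _ hi
  constructor
  · rintro ⟨h1, h2⟩
    refine ⟨⟨hhead ▸ h1, ?_⟩, ?_, ?_⟩
    · intro i hi
      have := h2 i (by simp; omega)
      rwa [hget _ (by omega), hget _ (by omega)] at this
    · have := (h2 (u.length - 1) (by simp; omega)).1
      rwa [show u.length - 1 + 1 = u.length by omega, hgetlast] at this
    · have := (h2 (u.length - 1) (by simp; omega)).2
      rw [show u.length - 1 + 1 = u.length by omega, hgetlast,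
        hget _ (by omega)] at this
      rwa [lastD_eq_getD hu]
  · rintro ⟨⟨h1, h2⟩, hd1, hd2⟩
    refine ⟨hhead ▸ h1, ?_⟩
    intro i hi
    simp only [List.length_append, List.length_singleton] at hi
    rcases Nat.lt_or_ge (i + 1) u.length with h | h
    · rw [hget _ h, hget _ (by omega)]
      exact h2 i h
    · have hieq : i + 1 = u.length := by omega
      rw [hieq, hgetlast, hget _ (by omega)]
      rw [lastD_eq_getD hu] at hd2
      rw [show i = u.length - 1 by omega]
      exact ⟨hd1, hd2⟩

/-- `L_n` enumerates, without repetition, exactly the length-`n` paths of the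
Catalan generating tree. -/
theorem stmt7 (n : Nat) (hn : 1 ≤ n) :
    (grayL n).Nodup ∧ ∀ w : List Nat, w ∈ grayL n ↔ (w.length = n ∧ isTreeWord w) := by
  induction n with
  | zero => omega
  | succ n ih =>
    rcases Nat.eq_or_lt_of_le hn with h | h
    · -- n + 1 = 1
      have hn0 : n = 0 := by omega
      subst hn0
      constructor
      · simp [grayL]
      · intro w
        simp only [grayL, List.mem_singleton]
        constructor
        · rintro rfl
          refine ⟨rfl, rfl, ?_⟩
          intro j hj; simp at hj
        · rintro ⟨hlen, h1, _⟩
          obtain ⟨a, rfl⟩ := List.length_eq_one_iff.mp hlen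
          simp only [List.head?_cons, Option.some_inj] at h1
          subst h1; rfl
    · -- n ≥ 1
      have hn1 : 1 ≤ n := by omega
      obtain ⟨ih1, ih2⟩ := ih hn1
      obtain ⟨m, rfl⟩ : ∃ m, n = m + 1 := ⟨n - 1, by omega⟩
      have hgray : grayL (m + 1 + 1) = (graySubsAux 2 (grayL (m + 1))).flatten := rfl
      rw [hgray]
      have hlast : ∀ w ∈ grayL (m + 1), 2 ≤ lastD w := by
        intro w hw
        obtain ⟨hlen, htree⟩ := (ih2 w).mp hw
        exact tree_lastD htree (by intro h; subst h; simp at hlen)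
      obtain ⟨main1, main2⟩ := aux_main (grayL (m + 1)) 2 (Or.inl rfl) hlast ih1
      refine ⟨main1, ?_⟩
      intro v
      rw [main2 v]
      constructor
      · rintro ⟨w, hw, d, h1, h2, rfl⟩
        obtain ⟨hlen, htree⟩ := (ih2 w).mp hw
        have hne : w ≠ [] := by intro h; subst h; simp at hlen
        refine ⟨by simp [hlen], (tree_concat hne d).mpr ⟨htree, h1, h2⟩⟩
      · rintro ⟨hlen, htree⟩
        have hne : v ≠ [] := by intro h; subst h; simp at hlen
        obtain ⟨u, d, rfl⟩ : ∃ u d, v = u ++ [d] := by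
          refine ⟨v.dropLast, v.getLast hne, ?_⟩
          rw [List.dropLast_concat_getLast hne]
        have hune : u ≠ [] := by
          intro h; subst h
          simp only [List.nil_append, List.length_singleton] at hlen
          omega
        obtain ⟨htu, hd1, hd2⟩ := (tree_concat hune d).mp htree
        have hulen : u.length = m + 1 := by
          simp at hlen; omega
        exact ⟨u, (ih2 u).mpr ⟨hulen, htu⟩, d, hd1, hd2, rfl⟩
end

section
/- If two generating-tree words of length n differ in exactly one digit, then their corresponding Dyck binary strings (of length 2n) differ in exactly two bits. -/
def zeros (m : Nat) : List Bool := List.replicate m false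

/-- Appending digit `i` after a word ending in digit `k`: replace the final
`k - 1` zeros by `k + 1 - i` zeros, a one, and `i - 1` zeros. -/
def encStep (u : List Bool) (k i : Nat) : List Bool :=
  u.take (u.length - (k - 1)) ++ zeros (k + 1 - i) ++ [true] ++ zeros (i - 1)

def encAux : List Bool → Nat → List Nat → List Bool
  | u, _, [] => u
  | u, k, i :: rest => encAux (encStep u k i) i rest

/-- Encoding of a generating-tree word into a binary (Dyck) string,
starting from `10` for the word `2`. -/
def enc : List Nat → List Bool
  | [] => []
  | _ :: rest => encAux [true, false] 2 rest

/-- A Dyck word: balanced, and every prefix has at least as many ones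
(`true`) as zeros (`false`). -/
def isDyck (u : List Bool) : Prop :=
  u.count true = u.count false ∧
  ∀ m, (u.take m).count false ≤ (u.take m).count true

/-- Hamming distance: number of positions where two words differ. -/
def hamming {α : Type*} [DecidableEq α] (v w : List α) : Nat :=
  ((v.zip w).filter (fun p => decide (p.1 ≠ p.2))).length

/- ### Auxiliary development -/

lemma hamming_nil {α : Type*} [DecidableEq α] (w : List α) : hamming [] w = 0 := by
  simp [hamming]

lemma hamming_cons_eq {α : Type*} [DecidableEq α] (a : α) (v w : List α) :
    hamming (a :: v) (a :: w) = hamming v w := by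
  simp [hamming]

lemma hamming_cons_ne {α : Type*} [DecidableEq α] {a b : α} (h : a ≠ b) (v w : List α) :
    hamming (a :: v) (b :: w) = hamming v w + 1 := by
  simp [hamming, h, Nat.add_comm]

lemma hamming_self {α : Type*} [DecidableEq α] (l : List α) : hamming l l = 0 := by
  induction l with
  | nil => simp [hamming]
  | cons a t ih => rw [hamming_cons_eq]; exact ih

lemma hamming_append {α : Type*} [DecidableEq α] (A B S T : List α)
    (h : A.length = B.length) :
    hamming (A ++ S) (B ++ T) = hamming A B + hamming S T := by
  induction A generalizing B with
  | nil =>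
    cases B with
    | nil => simp [hamming_nil]
    | cons b B => simp at h
  | cons a A ih =>
    cases B with
    | nil => simp at h
    | cons b B =>
      simp only [List.length_cons, Nat.add_right_cancel_iff] at h
      by_cases hab : a = b
      · subst hab
        simp only [List.cons_append, hamming_cons_eq]
        exact ih B h
      · simp only [List.cons_append, hamming_cons_ne hab]
        rw [ih B h]; omega

lemma eq_of_hamming_zero {α : Type*} [DecidableEq α] :
    ∀ (v w : List α), v.length = w.length → hamming v w = 0 → v = w := by
  intro v
  induction v with
  | nil => intro w h _; cases w with
    | nil => rfl
    | cons b w => simp at h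
  | cons a v ih =>
    intro w h h0
    cases w with
    | nil => simp at h
    | cons b w =>
      by_cases hab : a = b
      · subst hab
        rw [hamming_cons_eq] at h0
        simp only [List.length_cons, Nat.add_right_cancel_iff] at h
        rw [ih w h h0]
      · rw [hamming_cons_ne hab] at h0; omega

def oneAt (m r : Nat) : List Bool := zeros m ++ [true] ++ zeros r

lemma zeros_succ (m : Nat) : zeros (m + 1) = false :: zeros m := rfl

lemma length_zeros (m : Nat) : (zeros m).length = m := by simp [zeros]

lemma length_oneAt (m r : Nat) : (oneAt m r).length = m + r + 1 := by
  simp [oneAt, length_zeros]; omega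

lemma hamming_zeros_oneAt (m r : Nat) :
    hamming (zeros (m + r + 1)) (oneAt m r) = 1 := by
  induction m with
  | zero =>
    have : zeros (0 + r + 1) = false :: zeros r := by
      simp [zeros, List.replicate_succ]
    rw [this]
    show hamming (false :: zeros r) (true :: zeros r) = 1
    rw [hamming_cons_ne (by simp) _ _, hamming_self]
  | succ m ih =>
    have h1 : zeros (m + 1 + r + 1) = false :: zeros (m + r + 1) := by
      rw [show m + 1 + r + 1 = (m + r + 1) + 1 from by omega, zeros_succ]
    have h2 : oneAt (m + 1) r = false :: oneAt m r := rfl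
    rw [h1, h2, hamming_cons_eq, ih]

lemma hamming_oneAt_zeros (m r : Nat) :
    hamming (oneAt m r) (zeros (m + r + 1)) = 1 := by
  induction m with
  | zero =>
    have : zeros (0 + r + 1) = false :: zeros r := by
      simp [zeros, List.replicate_succ]
    rw [this]
    show hamming (true :: zeros r) (false :: zeros r) = 1
    rw [hamming_cons_ne (by simp) _ _, hamming_self]
  | succ m ih =>
    have h1 : zeros (m + 1 + r + 1) = false :: zeros (m + r + 1) := by
      rw [show m + 1 + r + 1 = (m + r + 1) + 1 from by omega, zeros_succ]
    have h2 : oneAt (m + 1) r = false :: oneAt m r := rfl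
    rw [h1, h2, hamming_cons_eq, ih]

lemma hamming_oneAt : ∀ (m r m' r' : Nat), m + r = m' + r' → m ≠ m' →
    hamming (oneAt m r) (oneAt m' r') = 2 := by
  intro m
  induction m with
  | zero =>
    intro r m' r' hlen hne
    cases m' with
    | zero => omega
    | succ m' =>
      have h2 : oneAt (m' + 1) r' = false :: oneAt m' r' := rfl
      have h1 : oneAt 0 r = true :: zeros r := rfl
      rw [h1, h2, hamming_cons_ne (by simp) _ _]
      have : r = m' + r' + 1 := by omega
      rw [this, hamming_zeros_oneAt]
  | succ m ih =>
    intro r m' r' hlen hne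
    cases m' with
    | zero =>
      have h2 : oneAt (m + 1) r = false :: oneAt m r := rfl
      have h1 : oneAt 0 r' = true :: zeros r' := rfl
      rw [h1, h2, hamming_cons_ne (by simp) _ _]
      have : r' = m + r + 1 := by omega
      rw [this, hamming_oneAt_zeros]
    | succ m' =>
      have h2 : oneAt (m' + 1) r' = false :: oneAt m' r' := rfl
      have h1 : oneAt (m + 1) r = false :: oneAt m r := rfl
      rw [h1, h2, hamming_cons_eq]
      exact ih r m' r' (by omega) (by omega)

/-- Structured form of the encoding after the first digit. -/
def encBody : Nat → List Nat → List Bool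
  | k, [] => zeros (k - 1)
  | k, i :: rest => zeros (k + 1 - i) ++ [true] ++ encBody i rest

lemma encAux_eq (L : List Nat) : ∀ (P : List Bool) (k : Nat),
    encAux (P ++ zeros (k - 1)) k L = P ++ encBody k L := by
  induction L with
  | nil => intro P k; rfl
  | cons i rest ih =>
    intro P k
    show encAux (encStep (P ++ zeros (k - 1)) k i) i rest = _
    have hstep : encStep (P ++ zeros (k - 1)) k i
        = (P ++ zeros (k + 1 - i) ++ [true]) ++ zeros (i - 1) := by
      unfold encStep
      have hlen : (P ++ zeros (k - 1)).length - (k - 1) = P.length := by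
        simp [length_zeros]
      rw [hlen]
      have : (P ++ zeros (k - 1)).take P.length = P := by
        rw [List.take_append_of_le_length (le_refl _), List.take_length]
      rw [this]
      try simp [List.append_assoc]
    rw [hstep, ih]
    show _ = P ++ (zeros (k + 1 - i) ++ [true] ++ encBody i rest)
    simp [List.append_assoc]

/-- Chain condition for the tail of a tree word whose previous digit is `k`. -/
def chain : Nat → List Nat → Prop
  | _, [] => True
  | k, i :: rest => 2 ≤ i ∧ i ≤ k + 1 ∧ chain i rest

lemma chain_of_treeWord : ∀ (t : List Nat) (k : Nat),
    (∀ j, j + 1 < (k :: t).length →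
      2 ≤ (k :: t).getD (j + 1) 0 ∧ (k :: t).getD (j + 1) 0 ≤ (k :: t).getD j 0 + 1) →
    chain k t := by
  intro t
  induction t with
  | nil => intro k _; trivial
  | cons i rest ih =>
    intro k h
    have h0 := h 0 (by simp)
    simp only [List.getD_cons_succ, List.getD_cons_zero] at h0
    refine ⟨h0.1, h0.2, ih i ?_⟩
    intro j hj
    have := h (j + 1) (by simpa using Nat.succ_lt_succ hj)
    simpa using this

/-- Key lemma: encodings of chains at hamming distance 1 are at distance 2. -/
lemma main_lemma : ∀ (v w : List Nat) (k : Nat), v.length = w.length →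
    chain k v → chain k w → hamming v w = 1 →
    hamming (encBody k v) (encBody k w) = 2 := by
  intro v
  induction v with
  | nil =>
    intro w k hlen _ _ h1
    cases w with
    | nil => rw [hamming_nil] at h1; omega
    | cons b w => simp at hlen
  | cons a v ih =>
    intro w k hlen hcv hcw h1
    cases w with
    | nil => simp at hlen
    | cons b w =>
      simp only [List.length_cons, Nat.add_right_cancel_iff] at hlen
      obtain ⟨ha2, hak, hcv'⟩ := hcv
      obtain ⟨hb2, hbk, hcw'⟩ := hcw
      by_cases hab : a = b
      · -- same first digit: recurse
        subst hab
        rw [hamming_cons_eq] at h1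
        show hamming (zeros (k + 1 - a) ++ [true] ++ encBody a v)
          (zeros (k + 1 - a) ++ [true] ++ encBody a w) = 2
        have h2 := ih w a hlen hcv' hcw' h1
        rw [List.append_assoc, List.append_assoc,
          hamming_append _ _ _ _ rfl, hamming_append _ _ _ _ rfl,
          hamming_self, hamming_self, h2]
      · -- differing first digit: tails are equal
        rw [hamming_cons_ne hab] at h1
        have hvw : v = w := eq_of_hamming_zero v w hlen (by omega)
        subst hvw
        cases v with
        | nil =>
          show hamming (zeros (k + 1 - a) ++ [true] ++ zeros (a - 1))
            (zeros (k + 1 - b) ++ [true] ++ zeros (b - 1)) = 2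
          exact hamming_oneAt _ _ _ _ (by omega) (by omega)
        | cons i rest =>
          obtain ⟨hi2, hia, _⟩ := hcv'
          obtain ⟨_, hib, _⟩ := hcw'
          show hamming
            (zeros (k + 1 - a) ++ [true] ++ (zeros (a + 1 - i) ++ [true] ++ encBody i rest))
            (zeros (k + 1 - b) ++ [true] ++ (zeros (b + 1 - i) ++ [true] ++ encBody i rest)) = 2
          have ea : zeros (k + 1 - a) ++ [true] ++ (zeros (a + 1 - i) ++ [true] ++ encBody i rest)
              = oneAt (k + 1 - a) (a + 1 - i) ++ ([true] ++ encBody i rest) := by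
            simp [oneAt, List.append_assoc]
          have eb : zeros (k + 1 - b) ++ [true] ++ (zeros (b + 1 - i) ++ [true] ++ encBody i rest)
              = oneAt (k + 1 - b) (b + 1 - i) ++ ([true] ++ encBody i rest) := by
            simp [oneAt, List.append_assoc]
          rw [ea, eb, hamming_append _ _ _ _ (by rw [length_oneAt, length_oneAt]; omega),
            hamming_self, hamming_oneAt _ _ _ _ (by omega) (by omega)]

/-- Two generating-tree words of length `n` differing in exactly one digit
have encodings differing in exactly two bits. -/
theorem stmt14 (n : Nat) (hn : 1 ≤ n) (v w : List Nat)
    (hv : v.length = n ∧ isTreeWord v) (hw : w.length = n ∧ isTreeWord w)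
    (h : hamming v w = 1) :
    hamming (enc v) (enc w) = 2 := by
  obtain ⟨hvl, hvh, hvc⟩ := hv
  obtain ⟨hwl, hwh, hwc⟩ := hw
  cases v with
  | nil => simp at hvh
  | cons a v' =>
    cases w with
    | nil => simp at hwh
    | cons b w' =>
      simp only [List.head?_cons, Option.some_inj] at hvh hwh
      subst hvh; subst hwh
      rw [hamming_cons_eq] at h
      have hlen : v'.length = w'.length := by
        simp only [List.length_cons] at hvl hwl; omega
      have hcv : chain 2 v' := chain_of_treeWord v' 2 hvc
      have hcw : chain 2 w' := chain_of_treeWord w' 2 hwc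
      have ev : enc (2 :: v') = [true] ++ encBody 2 v' := by
        show encAux [true, false] 2 v' = _
        have : ([true, false] : List Bool) = [true] ++ zeros (2 - 1) := rfl
        rw [this, encAux_eq]
      have ew : enc (2 :: w') = [true] ++ encBody 2 w' := by
        show encAux [true, false] 2 w' = _
        have : ([true, false] : List Bool) = [true] ++ zeros (2 - 1) := rfl
        rw [this, encAux_eq]
      rw [ev, ew]
      show hamming (true :: encBody 2 v') (true :: encBody 2 w') = 2
      rw [hamming_cons_eq]
      exact main_lemma v' w' 2 hlen hcv hcw h
end

section
/- In the list of Dyck words of semilength n obtained by encoding the Gray code list L_n word by word, any two consecutive Dyck words have Hamming distance exactly 2. -/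
-- ===== hamming lemmas =====

lemma hamming_append_s16 {u u' v v' : List Bool} (h : u.length = u'.length) :
    hamming (u ++ v) (u' ++ v') = hamming u u' + hamming v v' := by
  unfold hamming
  rw [List.zip_append h, List.filter_append, List.length_append]

lemma hamming_self_s16 (u : List Bool) : hamming u u = 0 := by
  induction u with
  | nil => rfl
  | cons a u ih => simpa [hamming, List.filter_cons] using ih

lemma hamming_comm (u v : List Bool) : hamming u v = hamming v u := by
  induction u generalizing v with
  | nil => cases v <;> rfl
  | cons a u ih =>
    cases v with
    | nil => rfl
    | cons b v =>
      simp only [hamming, List.zip_cons_cons, List.filter_cons] at *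
      by_cases hab : a = b
      · subst hab; simpa using ih v
      · simp [hab, Ne.symm hab]
        have := ih v
        simpa [hamming] using this

-- core two-block lemma
lemma hammingH' (α β α' β' : Nat) (Z : List Bool) (hsum : α + β = α' + β')
    (hlt : α < α') :
    hamming (true :: zeros α ++ true :: zeros β ++ Z)
            (true :: zeros α' ++ true :: zeros β' ++ Z) = 2 := by
  obtain ⟨t, rfl⟩ : ∃ t, α' = α + t + 1 := ⟨α' - α - 1, by omega⟩
  have hb : β = t + 1 + β' := by omega
  subst hb
  have hz1 : zeros (t + 1 + β') = zeros t ++ false :: zeros β' := by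
    unfold zeros
    rw [show t + 1 + β' = t + (1 + β') by omega, List.replicate_add,
      show (1:Nat) + β' = β' + 1 by omega, List.replicate_succ]
  have hz2 : zeros (α + t + 1) = zeros α ++ false :: zeros t := by
    unfold zeros
    rw [show α + t + 1 = α + (1 + t) by omega, List.replicate_add,
      show (1:Nat) + t = t + 1 by omega, List.replicate_succ]
  have e1 : true :: zeros α ++ true :: zeros (t + 1 + β') ++ Z
      = (true :: zeros α) ++ ([true] ++ (zeros t ++ ([false] ++ (zeros β' ++ Z)))) := by
    rw [hz1]; simp [List.append_assoc]
  have e2 : true :: zeros (α + t + 1) ++ true :: zeros β' ++ Z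
      = (true :: zeros α) ++ ([false] ++ (zeros t ++ ([true] ++ (zeros β' ++ Z)))) := by
    rw [hz2]; simp [List.append_assoc]
  rw [e1, e2]
  rw [hamming_append_s16 (u := true :: zeros α) (u' := true :: zeros α) rfl, hamming_self_s16]
  rw [hamming_append_s16 (u := [true]) (u' := [false]) rfl]
  rw [hamming_append_s16 (u := zeros t) (u' := zeros t) rfl, hamming_self_s16]
  rw [hamming_append_s16 (u := [false]) (u' := [true]) rfl, hamming_self_s16]
  rfl

lemma hammingH (α β α' β' : Nat) (Z : List Bool) (hsum : α + β = α' + β')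
    (hne : α ≠ α') :
    hamming (true :: zeros α ++ true :: zeros β ++ Z)
            (true :: zeros α' ++ true :: zeros β' ++ Z) = 2 := by
  rcases lt_or_gt_of_ne hne with h | h
  · exact hammingH' _ _ _ _ _ hsum h
  · rw [hamming_comm]; exact hammingH' _ _ _ _ _ hsum.symm h

-- ===== tail encoding =====

def tailEnc : Nat → Nat → List Nat → List Bool
  | k, s, [] => true :: zeros (k - 1 + s)
  | k, s, d :: l => (true :: zeros (s + (k + 1 - d))) ++ tailEnc d 0 l

lemma encAux_eq_tailEnc (l : List Nat) : ∀ (k s : Nat) (W : List Bool),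
    encAux (W ++ true :: zeros (k - 1 + s)) k l = W ++ tailEnc k s l := by
  induction l with
  | nil => intro k s W; rfl
  | cons d l ih =>
    intro k s W
    have hstep : encStep (W ++ true :: zeros (k - 1 + s)) k d
        = (W ++ true :: zeros (s + (k + 1 - d))) ++ true :: zeros (d - 1 + 0) := by
      unfold encStep
      have hlen : (W ++ true :: zeros (k - 1 + s)).length - (k - 1)
          = W.length + (1 + s) := by
        simp [zeros]; omega
      rw [hlen, List.take_append]
      have h1 : W.take (W.length + (1 + s)) = W := List.take_of_length_le (by omega)
      have h2 : W.length + (1 + s) - W.length = 1 + s := by omega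
      rw [h1, h2]
      have h3 : (true :: zeros (k - 1 + s)).take (1 + s) = true :: zeros s := by
        rw [show (1:Nat) + s = s + 1 by omega, List.take_succ_cons]
        unfold zeros
        rw [List.take_replicate, show min s (k - 1 + s) = s from by omega]
      rw [h3]
      have hz : zeros s ++ zeros (k + 1 - d) = zeros (s + (k + 1 - d)) := by
        unfold zeros; rw [List.replicate_add]
      simp only [List.append_assoc, List.cons_append, List.nil_append]
      rw [← List.append_assoc (zeros s), hz]
      rfl
    show encAux (encStep (W ++ true :: zeros (k - 1 + s)) k d) d l = _
    rw [hstep, ih d 0 (W ++ true :: zeros (s + (k + 1 - d)))]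
    rw [List.append_assoc]
    rfl

lemma enc_cons (h : Nat) (r : List Nat) : enc (h :: r) = tailEnc 2 0 r := by
  have : enc (h :: r) = encAux ([] ++ true :: zeros (2 - 1 + 0)) 2 r := rfl
  rw [this, encAux_eq_tailEnc]; rfl

-- key distance lemma on tailEnc
lemma tailEnc_hamming : ∀ (a : List Nat) (k s x y : Nat) (c : List Nat),
    x ≠ y → 2 ≤ x → 2 ≤ y → x ≤ a.getLastD k + 1 → y ≤ a.getLastD k + 1 →
    c.headD 2 ≤ x + 1 → c.headD 2 ≤ y + 1 →
    hamming (tailEnc k s (a ++ x :: c)) (tailEnc k s (a ++ y :: c)) = 2 := by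
  intro a
  induction a with
  | nil =>
    intro k s x y c hne hx2 hy2 hxk hyk hcx hcy
    simp only [List.getLastD_nil] at hxk hyk
    cases c with
    | nil =>
      show hamming ((true :: zeros (s + (k+1-x))) ++ (true :: zeros (x-1+0)))
        ((true :: zeros (s + (k+1-y))) ++ (true :: zeros (y-1+0))) = _
      have := hammingH (s + (k+1-x)) (x-1+0) (s + (k+1-y)) (y-1+0) []
        (by omega) (by omega)
      simpa using this
    | cons d c' =>
      simp only [List.headD_cons] at hcx hcy
      show hamming ((true :: zeros (s + (k+1-x))) ++ ((true :: zeros (0 + (x+1-d))) ++ tailEnc d 0 c'))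
        ((true :: zeros (s + (k+1-y))) ++ ((true :: zeros (0 + (y+1-d))) ++ tailEnc d 0 c')) = _
      have := hammingH (s + (k+1-x)) (0 + (x+1-d)) (s + (k+1-y)) (0 + (y+1-d))
        (tailEnc d 0 c') (by omega) (by omega)
      simpa [List.append_assoc] using this
  | cons e a' ih =>
    intro k s x y c hne hx2 hy2 hxk hyk hcx hcy
    simp only [List.getLastD_cons] at hxk hyk
    show hamming ((true :: zeros (s + (k+1-e))) ++ tailEnc e 0 (a' ++ x :: c))
      ((true :: zeros (s + (k+1-e))) ++ tailEnc e 0 (a' ++ y :: c)) = _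
    rw [hamming_append_s16 rfl, hamming_self_s16]
    rw [ih e 0 x y c hne hx2 hy2 hxk hyk hcx hcy]
-- ===== combinatorial layer =====

def G (w : List Nat) : Prop := (∃ t, w = 2 :: t) ∧ 2 ≤ lastD w

def Pair (w w' : List Nat) : Prop :=
  ∃ a x y c, w = 2 :: (a ++ x :: c) ∧ w' = 2 :: (a ++ y :: c) ∧ x ≠ y ∧
    2 ≤ x ∧ 2 ≤ y ∧ x ≤ a.getLastD 2 + 1 ∧ y ≤ a.getLastD 2 + 1 ∧
    c.headD 2 ≤ x + 1 ∧ c.headD 2 ≤ y + 1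

lemma pair_hamming {w w' : List Nat} (h : Pair w w') :
    hamming (enc w) (enc w') = 2 := by
  obtain ⟨a, x, y, c, rfl, rfl, hne, hx, hy, hxa, hya, hcx, hcy⟩ := h
  rw [enc_cons, enc_cons]
  exact tailEnc_hamming a 2 0 x y c hne hx hy hxa hya hcx hcy

lemma lastD_cons2 (t : List Nat) : lastD (2 :: t) = t.getLastD 2 := by
  show (2 :: t).getLastD 0 = t.getLastD 2
  rw [List.getLastD_cons]

lemma pair_within {w : List Nat} (hG : G w) {d1 d2 : Nat} (h12 : d1 ≠ d2)
    (h1 : 2 ≤ d1) (h2 : 2 ≤ d2) (h1k : d1 ≤ lastD w + 1) (h2k : d2 ≤ lastD w + 1) :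
    Pair (w ++ [d1]) (w ++ [d2]) := by
  obtain ⟨⟨t, rfl⟩, _⟩ := hG
  rw [lastD_cons2] at h1k h2k
  exact ⟨t, d1, d2, [], by simp, by simp, h12, h1, h2, h1k, h2k,
    by simpa using by omega, by simpa using by omega⟩

lemma pair_append {w w' : List Nat} (h : Pair w w') {d : Nat} (hd2 : 2 ≤ d)
    (hdw : d ≤ lastD w + 1) (hdw' : d ≤ lastD w' + 1) :
    Pair (w ++ [d]) (w' ++ [d]) := by
  obtain ⟨a, x, y, c, rfl, rfl, hne, hx, hy, hxa, hya, hcx, hcy⟩ := h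
  refine ⟨a, x, y, c ++ [d], by simp, by simp, hne, hx, hy, hxa, hya, ?_, ?_⟩
  · cases c with
    | nil =>
      rw [lastD_cons2] at hdw
      simp only [List.getLastD_concat] at hdw
      simpa using hdw
    | cons e c' => simpa using hcx
  · cases c with
    | nil =>
      rw [lastD_cons2] at hdw'
      simp only [List.getLastD_concat] at hdw'
      simpa using hdw'
    | cons e c' => simpa using hcy

lemma G_append {w : List Nat} (hG : G w) {d : Nat} (hd : 2 ≤ d) : G (w ++ [d]) := by
  obtain ⟨⟨t, rfl⟩, _⟩ := hG
  exact ⟨⟨t ++ [d], by simp⟩, by rw [lastD_concat]; exact hd⟩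

-- ===== sC facts =====

lemma sC2_eq (k : Nat) : sC k 2 = 2 :: (List.range (k - 1)).map (fun t => k + 1 - t) := by
  simp [sC]

lemma sC3_eq (k : Nat) : sC k 3 = (List.range (k - 1)).map (fun t => 3 + t) ++ [2] := by
  have h1 : k + 2 - 3 = k - 1 := by omega
  have h2 : List.map (fun t => 2 + t) (List.range 1) = [2] := rfl
  simp [sC, h1, h2]

lemma chain'_imp_mem {α : Type*} {R S : α → α → Prop} :
    ∀ {l : List α}, l.IsChain R → (∀ a ∈ l, ∀ b ∈ l, R a b → S a b) → l.IsChain S := by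
  intro l
  induction l with
  | nil => intro _ _; simp
  | cons a l ih =>
    intro h hm
    rw [List.isChain_cons] at h ⊢
    refine ⟨fun y hy => hm _ (List.mem_cons_self) _
      (List.mem_cons_of_mem _ (List.mem_of_mem_head? hy)) (h.1 y hy),
      ih h.2 (fun a ha b hb hr => hm _ (List.mem_cons_of_mem _ ha) _
        (List.mem_cons_of_mem _ hb) hr)⟩

lemma sC_facts (k j : Nat) (hk : 2 ≤ k) (hj : j = 2 ∨ j = 3) :
    (sC k j).head? = some j ∧ (sC k j).getLast? = some (5 - j) ∧
    (∀ d ∈ sC k j, 2 ≤ d ∧ d ≤ k + 1) ∧ (sC k j).IsChain (· ≠ ·) := by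
  have hm : k - 1 = (k - 2) + 1 := by omega
  rcases hj with rfl | rfl
  · refine ⟨by simp [sC2_eq], ?_, ?_, ?_⟩
    · rw [sC2_eq, hm, List.range_succ, List.map_append, List.map_singleton]
      have : (2 : Nat) :: ((List.range (k - 2)).map (fun t => k + 1 - t)
          ++ [k + 1 - (k - 2)]) = (2 :: (List.range (k - 2)).map (fun t => k + 1 - t))
          ++ [k + 1 - (k - 2)] := by simp
      rw [this, List.getLast?_concat]
      congr 1
      omega
    · intro d hd
      rw [sC2_eq] at hd
      rcases List.mem_cons.mp hd with rfl | hd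
      · omega
      · obtain ⟨t, ht, rfl⟩ := List.mem_map.mp hd
        rw [List.mem_range] at ht
        omega
    · rw [sC2_eq, List.isChain_cons]
      constructor
      · intro y hy
        rw [hm, List.range_succ_eq_map] at hy
        simp only [List.map_cons, List.head?_cons, Option.mem_def, Option.some.injEq] at hy
        omega
      · rw [List.isChain_map, hm, List.isChain_range_succ]
        intro m hmlt
        have : m + 1 ≤ k - 1 := by omega
        intro hc
        omega
  · refine ⟨?_, ?_, ?_, ?_⟩
    · rw [sC3_eq, hm, List.range_succ_eq_map]
      simp
    · rw [sC3_eq, List.getLast?_concat]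
    · intro d hd
      rw [sC3_eq, List.mem_append] at hd
      rcases hd with hd | hd
      · obtain ⟨t, ht, rfl⟩ := List.mem_map.mp hd
        rw [List.mem_range] at ht
        omega
      · simp at hd
        omega
    · rw [sC3_eq, List.isChain_append]
      refine ⟨?_, by simp, ?_⟩
      · rw [List.isChain_map, hm, List.isChain_range_succ]
        intro m _
        omega
      · intro x hx y hy
        rw [hm, List.range_succ, List.map_append, List.map_singleton,
          List.getLast?_concat] at hx
        simp only [Option.mem_def, Option.some.injEq] at hx hy
        have hy' : y = 2 := by simpa using hy.symm
        omega

-- ===== main induction =====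

lemma key : ∀ (L : List (List Nat)) (j : Nat), (j = 2 ∨ j = 3) →
    (∀ w ∈ L, G w) → L.IsChain Pair →
    (∀ v ∈ (graySubsAux j L).flatten, G v) ∧ ((graySubsAux j L).flatten).IsChain Pair ∧
    ((graySubsAux j L).flatten).head? = L.head?.map (· ++ [j]) := by
  intro L
  induction L with
  | nil =>
    intro j hj _ _
    exact ⟨by simp [graySubsAux], by simp [graySubsAux], by simp [graySubsAux]⟩
  | cons w ws ih =>
    intro j hj hGmem hchain
    have hGw : G w := hGmem w (List.mem_cons_self)
    have hk : 2 ≤ lastD w := hGw.2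
    obtain ⟨hhead, hlast, hmem, hchainS⟩ := sC_facts (lastD w) j hk hj
    have hsubLast : ((sC (lastD w) j).map (fun d => w ++ [d])).getLastD []
        = w ++ [5 - j] := by
      rw [List.getLastD_eq_getLast?, List.getLast?_map, hlast]
      rfl
    have hj2 : lastD (((sC (lastD w) j).map (fun d => w ++ [d])).getLastD []) = 5 - j := by
      rw [hsubLast, lastD_concat]
    have hunfold : graySubsAux j (w :: ws)
        = ((sC (lastD w) j).map (fun d => w ++ [d])) :: graySubsAux (5 - j) ws := by
      show ((sC (lastD w) j).map (fun d => w ++ [d]))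
          :: graySubsAux (lastD (((sC (lastD w) j).map (fun d => w ++ [d])).getLastD [])) ws
          = _
      rw [hj2]
    have hj' : 5 - j = 2 ∨ 5 - j = 3 := by omega
    have hj5 : 2 ≤ 5 - j := by omega
    obtain ⟨ihG, ihChain, ihHead⟩ := ih (5 - j) hj'
      (fun v hv => hGmem v (List.mem_cons_of_mem _ hv)) (List.isChain_cons.mp hchain).2
    have hGsub : ∀ v ∈ (sC (lastD w) j).map (fun d => w ++ [d]), G v := by
      intro v hv
      obtain ⟨d, hd, rfl⟩ := List.mem_map.mp hv
      exact G_append hGw (hmem d hd).1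
    have hchainSub : ((sC (lastD w) j).map (fun d => w ++ [d])).IsChain Pair := by
      rw [List.isChain_map]
      exact chain'_imp_mem hchainS (fun d1 h1 d2 h2 hne =>
        pair_within hGw hne (hmem _ h1).1 (hmem _ h2).1 (hmem _ h1).2 (hmem _ h2).2)
    rw [hunfold]
    have hjoin : ∀ (A : List (List Nat)) (B : List (List (List Nat))),
        (A :: B).flatten = A ++ B.flatten := fun _ _ => rfl
    rw [hjoin]
    refine ⟨?_, ?_, ?_⟩
    · intro v hv
      rcases List.mem_append.mp hv with hv | hv
      · exact hGsub v hv
      · exact ihG v hv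
    · rw [List.isChain_append]
      refine ⟨hchainSub, ihChain, ?_⟩
      intro x hx y hy
      have hx' : x = w ++ [5 - j] := by
        rw [List.getLast?_map, hlast] at hx
        simpa using hx.symm
      cases ws with
      | nil => simp [graySubsAux] at hy
      | cons w' ws' =>
        have hy' : y = w' ++ [5 - j] := by
          rw [ihHead] at hy
          simpa using hy.symm
        subst hx' hy'
        have hpww' : Pair w w' := by
          rcases List.isChain_cons_cons.mp hchain with ⟨h, _⟩
          exact h
        have hGw' : G w' := hGmem w' (List.mem_cons_of_mem _ (List.mem_cons_self))
        exact pair_append hpww' hj5 (by omega) (by have := hGw'.2; omega)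
    · rw [List.head?_append, List.head?_map, hhead]
      rfl

lemma grayL_good : ∀ n, (∀ w ∈ grayL n, G w) ∧ (grayL n).IsChain Pair
  | 0 => by constructor <;> simp [grayL]
  | 1 => by
    constructor
    · intro w hw
      simp only [grayL, List.mem_singleton] at hw
      subst hw
      exact ⟨⟨[], rfl⟩, by simp [lastD]⟩
    · simp [grayL]
  | (n + 2) => by
    obtain ⟨h1, h2⟩ := grayL_good (n + 1)
    obtain ⟨a, b, _⟩ := key (grayL (n + 1)) 2 (Or.inl rfl) h1 h2
    exact ⟨a, b⟩


/-- Encoding the Gray code list `L_n` word by word gives a list of Dyck words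
in which any two consecutive ones have Hamming distance exactly 2. -/
theorem stmt16 (n : Nat) (hn : 1 ≤ n) (i : Nat) (hi : i + 1 < (grayL n).length) :
    hamming (enc ((grayL n).getD i [])) (enc ((grayL n).getD (i + 1) [])) = 2 := by
  have hch := (grayL_good n).2
  rw [List.isChain_iff_getElem] at hch
  have hp := hch i (by omega)
  rw [List.getD_eq_getElem _ _ (by omega : i < (grayL n).length),
    List.getD_eq_getElem _ _ hi]
  exact pair_hamming hp
end
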